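/- In any safflower F rooted at r: if C₁ and C₂ are paths from r to nicely coloured vertices e₁, e₂ of F respectively, and v is the last common vertex of C₁ and C₂, then at least one of e₁, e₂ has the same colour as v. -/

import Mathlib

open SimpleGraph

/-- A colouring `c` of the vertices of `G` with `k` colours is a *parity vertex colouring*
if every (nonempty) path in `G` contains an odd number of occurrences of some colour. -/
def IsParityColoring {V : Type} (G : SimpleGraph V) {k : ℕ} (c : V → Fin k) : Prop :=
  ∀ ⦃u v : V⦄ (p : G.Walk u v), p.IsPath → ∃ i : Fin k, Odd ((p.support.map c).count i)

/-- The parity vertex chromatic number `χ_p(G)`: the least number of colours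
in a parity vertex colouring of `G`. -/
noncomputable def parityChromaticNumber {V : Type} (G : SimpleGraph V) : ℕ :=
  sInf {k | ∃ c : V → Fin k, IsParityColoring G c}

/-- A rooted tree given by a parent function: the root is its own parent and every
vertex reaches the root by iterating the parent map. -/
structure ParentTree (V : Type) where
  root : V
  parent : V → V
  parent_root : parent root = root
  reaches : ∀ v, ∃ m, parent^[m] v = root

namespace ParentTree

variable {V : Type} (T : ParentTree V)

/-- The underlying (simple) graph of a rooted tree. -/
def graph : SimpleGraph V :=
  SimpleGraph.fromRel (fun u v => T.parent u = v)

/-- The children (sons) of a vertex. -/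
def children (v : V) : Set V := {u | T.parent u = v ∧ u ≠ v}

/-- A vertex with no sons. -/
def IsLeaf (v : V) : Prop := T.children v = ∅

/-- A branched vertex: one having at least two sons. -/
def IsBranched (v : V) : Prop := ∃ u ∈ T.children v, ∃ w ∈ T.children v, u ≠ w

/-- A binary tree: every vertex has at most two sons. -/
def IsBinary : Prop := ∀ v, (T.children v).ncard ≤ 2

/-- The depth of a vertex (the root has depth `0`). -/
noncomputable def depth (v : V) : ℕ := sInf {m | T.parent^[m] v = T.root}

/-- The tree has at most `l` layers (every vertex has depth `< l`). -/
def LayersLE (l : ℕ) : Prop := ∀ v, T.depth v + 1 ≤ l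

/-- The descendants of `v` (including `v` itself). -/
def Desc (v : V) : Set V := {u | ∃ m, T.parent^[m] u = v}

/-- `S` is (the vertex set of) a compatible subtree of `T` with top vertex `r`:
it contains `r`, and every other vertex of `S` has its parent in `S`
(so `S` is connected and `r` is its vertex closest to the root of `T`). -/
def IsSubtreeWithTop (S : Set V) (r : V) : Prop :=
  r ∈ S ∧ ∀ v ∈ S, v ≠ r → T.parent v ∈ S ∧ v ≠ T.root

/-- `v` is a leaf of the subtree on vertex set `S`. -/
def SLeaf (S : Set V) (v : V) : Prop :=
  v ∈ S ∧ ∀ u ∈ S, T.parent u = v → u = v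

/-- `v` is a branched vertex of the subtree on vertex set `S`. -/
def SBranched (S : Set V) (v : V) : Prop :=
  v ∈ S ∧ ∃ u ∈ S, ∃ w ∈ S, u ≠ w ∧ u ≠ v ∧ w ≠ v ∧ T.parent u = v ∧ T.parent w = v

/-- The subtree on `S` with top `r` is nicely coloured with nice colour `a` under the
colouring `c`: its root, all its leaves and all its branched vertices get colour `a`. -/
def IsNicelySubtree {k : ℕ} (c : V → Fin k) (a : Fin k) (S : Set V) (r : V) : Prop :=
  T.IsSubtreeWithTop S r ∧ c r = a ∧
    ∀ v, (T.SLeaf S v ∨ T.SBranched S v) → c v = a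

/-- `g_a(T_v)`: the maximal number of nicely coloured vertices of a compatible nicely
coloured subtree, with nice colour `a`, of the subtree of `T` rooted at `v`. -/
noncomputable def g {k : ℕ} (c : V → Fin k) (a : Fin k) (v : V) : ℕ :=
  sSup {m | ∃ S r, S ⊆ T.Desc v ∧ T.IsNicelySubtree c a S r ∧
    m = {u ∈ S | c u = a}.ncard}

end ParentTree

/-- A safflower coloured with `k` colours: a rooted tree whose vertex set is partitioned
into consecutive parts `T_0, …, T_{n-1}` (the original trees), the roots (`stem i`) of the
parts forming a path (the stem) starting at the root, each part being a nicely coloured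
binary subtree (with nice colour `nice i`), and the whole colouring being a parity vertex
colouring. -/
structure Safflower (V : Type) (k : ℕ) where
  tree : ParentTree V
  color : V → Fin k
  parity : IsParityColoring tree.graph color
  n : ℕ
  npos : 0 < n
  /-- the roots `r_1, …, r_n` of the original trees, forming the stem -/
  stem : Fin n → V
  stem_inj : Function.Injective stem
  stem_root : stem ⟨0, npos⟩ = tree.root
  stem_parent : ∀ (i : ℕ) (h : i + 1 < n),
    tree.parent (stem ⟨i + 1, h⟩) = stem ⟨i, Nat.lt_of_succ_lt h⟩
  /-- which original tree a vertex belongs to -/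
  part : V → Fin n
  part_stem : ∀ i, part (stem i) = i
  part_parent : ∀ v, v ≠ stem (part v) → part (tree.parent v) = part v
  /-- each original tree is binary -/
  binary : ∀ v, {u | tree.parent u = v ∧ u ≠ v ∧ part u = part v}.ncard ≤ 2
  /-- the nice colour of each original tree -/
  nice : Fin n → Fin k
  nice_root : ∀ i, color (stem i) = nice i
  /-- leaves and branched vertices of each original tree get its nice colour -/
  nice_special : ∀ v,
    ({u | tree.parent u = v ∧ u ≠ v ∧ part u = part v} = ∅ ∨
      ∃ u w, u ≠ w ∧ tree.parent u = v ∧ u ≠ v ∧ part u = part v ∧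
        tree.parent w = v ∧ w ≠ v ∧ part w = part v) →
    color v = nice (part v)

namespace Safflower

variable {V : Type} {k : ℕ} (F : Safflower V k)

/-- A nicely coloured vertex of a safflower: a vertex coloured with the nice colour
of its original tree. -/
def NiceVertex (v : V) : Prop := F.color v = F.nice (F.part v)

/-- `Num F`: the number of nicely coloured vertices of the safflower `F`. -/
noncomputable def Num : ℕ := {v | F.NiceVertex v}.ncard

end Safflower

/-! ### Auxiliary lemmas on `ParentTree` -/

namespace ParentTree

variable {V : Type} (T : ParentTree V)

lemma eq_root_of_parent_eq {x : V} (h : T.parent x = x) : x = T.root := by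
  obtain ⟨m, hm⟩ := T.reaches x
  rwa [Function.iterate_fixed h] at hm

lemma depth_spec (x : V) : T.parent^[T.depth x] x = T.root :=
  Nat.sInf_mem (T.reaches x)

lemma depth_root : T.depth T.root = 0 :=
  Nat.sInf_eq_zero.mpr (Or.inl rfl)

lemma eq_root_of_depth_eq_zero {x : V} (h : T.depth x = 0) : x = T.root := by
  have hs := T.depth_spec x
  rwa [h, Function.iterate_zero_apply] at hs

lemma depth_pos {x : V} (h : x ≠ T.root) : 0 < T.depth x := by
  rcases Nat.eq_zero_or_pos (T.depth x) with h0 | h0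
  · exact absurd (T.eq_root_of_depth_eq_zero h0) h
  · exact h0

lemma depth_parent {x : V} (h : x ≠ T.root) : T.depth (T.parent x) + 1 = T.depth x := by
  have hpos := T.depth_pos h
  have hle : T.depth (T.parent x) ≤ T.depth x - 1 := by
    apply Nat.sInf_le
    show T.parent^[T.depth x - 1] (T.parent x) = T.root
    rw [← Function.iterate_succ_apply, Nat.succ_eq_add_one, Nat.sub_add_cancel hpos]
    exact T.depth_spec x
  have hge : T.depth x ≤ T.depth (T.parent x) + 1 := by
    apply Nat.sInf_le
    show T.parent^[T.depth (T.parent x) + 1] x = T.root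
    rw [Function.iterate_succ_apply]
    exact T.depth_spec (T.parent x)
  omega

lemma depth_parent_le (x : V) : T.depth (T.parent x) ≤ T.depth x := by
  by_cases h : x = T.root
  · subst h; rw [T.parent_root]
  · have := T.depth_parent h; omega

lemma depth_iterate_le (m : ℕ) (x : V) : T.depth (T.parent^[m] x) ≤ T.depth x := by
  induction m generalizing x with
  | zero => simp
  | succ m ih =>
    rw [Function.iterate_succ_apply]
    exact (ih (T.parent x)).trans (T.depth_parent_le x)

lemma adj_parent {x : V} (h : x ≠ T.root) : T.graph.Adj x (T.parent x) := by
  rw [graph, SimpleGraph.fromRel_adj]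
  refine ⟨fun he => h (T.eq_root_of_parent_eq he.symm), Or.inl rfl⟩

open Classical in
/-- The canonical descending walk from a vertex to the root. -/
noncomputable def toRoot (x : V) : T.graph.Walk x T.root :=
  if h : x = T.root then (SimpleGraph.Walk.nil.copy h.symm rfl)
  else SimpleGraph.Walk.cons (T.adj_parent h) (toRoot (T.parent x))
termination_by T.depth x
decreasing_by
  have := T.depth_parent h; omega

lemma toRoot_of_ne {x : V} (h : x ≠ T.root) :
    T.toRoot x = SimpleGraph.Walk.cons (T.adj_parent h) (T.toRoot (T.parent x)) := by
  rw [toRoot, dif_neg h]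

lemma toRoot_root : T.toRoot T.root = SimpleGraph.Walk.nil := by
  rw [toRoot, dif_pos rfl, SimpleGraph.Walk.copy_rfl_rfl]

lemma support_toRoot_of_ne {x : V} (h : x ≠ T.root) :
    (T.toRoot x).support = x :: (T.toRoot (T.parent x)).support := by
  rw [T.toRoot_of_ne h, SimpleGraph.Walk.support_cons]

lemma support_toRoot_root : (T.toRoot T.root).support = [T.root] := by
  rw [T.toRoot_root, SimpleGraph.Walk.support_nil]

lemma mem_support_toRoot_of_iterate : ∀ (m : ℕ) (x : V),
    T.parent^[m] x ∈ (T.toRoot x).support := by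
  intro m
  induction m with
  | zero =>
    intro x; simpa using (T.toRoot x).start_mem_support
  | succ m ih =>
    intro x
    by_cases h : x = T.root
    · subst h
      rw [Function.iterate_fixed T.parent_root, T.support_toRoot_root]
      exact List.mem_singleton.mpr rfl
    · rw [Function.iterate_succ_apply, T.support_toRoot_of_ne h]
      exact List.mem_cons_of_mem _ (ih (T.parent x))

lemma exists_iterate_of_mem_support : ∀ (d : ℕ) (x : V), T.depth x = d →
    ∀ w ∈ (T.toRoot x).support, ∃ m, T.parent^[m] x = w := by
  intro d
  induction d using Nat.strong_induction_on with
  | _ d ih =>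
    intro x hd w hw
    by_cases h : x = T.root
    · subst h
      rw [T.support_toRoot_root, List.mem_singleton] at hw
      exact ⟨0, hw.symm⟩
    · rw [T.support_toRoot_of_ne h, List.mem_cons] at hw
      rcases hw with hw | hw
      · exact ⟨0, hw.symm⟩
      · have hdp : T.depth (T.parent x) < d := by
          have := T.depth_parent h; omega
        obtain ⟨m, hm⟩ := ih _ hdp (T.parent x) rfl w hw
        exact ⟨m + 1, by rwa [Function.iterate_succ_apply]⟩

lemma mem_support_toRoot {x w : V} :
    w ∈ (T.toRoot x).support ↔ ∃ m, T.parent^[m] x = w := by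
  constructor
  · exact T.exists_iterate_of_mem_support (T.depth x) x rfl w
  · rintro ⟨m, rfl⟩; exact T.mem_support_toRoot_of_iterate m x

lemma depth_le_of_mem_support {x w : V} (hw : w ∈ (T.toRoot x).support) :
    T.depth w ≤ T.depth x := by
  obtain ⟨m, rfl⟩ := (T.mem_support_toRoot).mp hw
  exact T.depth_iterate_le m x

lemma isPath_toRoot : ∀ (d : ℕ) (x : V), T.depth x = d → (T.toRoot x).IsPath := by
  intro d
  induction d using Nat.strong_induction_on with
  | _ d ih =>
    intro x hd
    by_cases h : x = T.root
    · subst h; rw [T.toRoot_root]; exact SimpleGraph.Walk.IsPath.nil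
    · rw [T.toRoot_of_ne h, SimpleGraph.Walk.cons_isPath_iff]
      have hdp : T.depth (T.parent x) < d := by
        have := T.depth_parent h; omega
      refine ⟨ih _ hdp (T.parent x) rfl, fun hx => ?_⟩
      have := T.depth_le_of_mem_support hx
      omega

lemma length_support_toRoot : ∀ (d : ℕ) (x : V), T.depth x = d →
    (T.toRoot x).support.length = T.depth x + 1 := by
  intro d
  induction d using Nat.strong_induction_on with
  | _ d ih =>
    intro x hd
    by_cases h : x = T.root
    · subst h; rw [T.support_toRoot_root, T.depth_root]; rfl
    · have hdp := T.depth_parent h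
      rw [T.support_toRoot_of_ne h, List.length_cons,
        ih (T.depth (T.parent x)) (by omega) (T.parent x) rfl]
      omega

lemma indexOf_reverse_support_toRoot [DecidableEq V] :
    ∀ (d : ℕ) (x : V), T.depth x = d → ∀ w ∈ (T.toRoot x).support,
    (T.toRoot x).support.reverse.idxOf w = T.depth w := by
  intro d
  induction d using Nat.strong_induction_on with
  | _ d ih =>
    intro x hd w hw
    by_cases h : x = T.root
    · subst h
      rw [T.support_toRoot_root] at hw ⊢
      rw [List.mem_singleton] at hw
      subst hw
      simp [T.depth_root]
    · have hdp := T.depth_parent h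
      rw [T.support_toRoot_of_ne h] at hw ⊢
      rw [List.reverse_cons]
      rcases List.mem_cons.mp hw with hw | hw
      · subst hw
        have hnot : w ∉ (T.toRoot (T.parent w)).support.reverse := by
          rw [List.mem_reverse]
          intro hmem
          have := T.depth_le_of_mem_support hmem
          omega
        rw [List.idxOf_append_of_notMem hnot, List.length_reverse,
          T.length_support_toRoot (T.depth (T.parent w)) (T.parent w) rfl]
        simp; omega
      · rw [List.idxOf_append_of_mem (List.mem_reverse.mpr hw)]
        exact ih (T.depth (T.parent x)) (by omega) (T.parent x) rfl w hw

/-- Uniqueness of paths to the root (auxiliary, with free endpoint). -/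
lemma path_unique_aux : ∀ {x y : V} (p : T.graph.Walk x y) (hy : y = T.root),
    p.IsPath → p.copy rfl hy = T.toRoot x := by
  intro x y p
  induction p with
  | nil =>
    intro hy _
    subst hy
    rw [SimpleGraph.Walk.copy_rfl_rfl, T.toRoot_root]
  | @cons x y _ h q ih =>
    intro hy hp
    subst hy
    rw [SimpleGraph.Walk.copy_rfl_rfl]
    have hq : q.IsPath := hp.of_cons
    have hxq : x ∉ q.support := ((SimpleGraph.Walk.cons_isPath_iff h q).mp hp).2
    have hadj := h
    rw [graph, SimpleGraph.fromRel_adj] at hadj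
    obtain ⟨hxy, hcase⟩ := hadj
    by_cases hpx : T.parent x = y
    · have hxr : x ≠ T.root := by
        intro hx
        apply hxy
        rw [← hpx, hx, T.parent_root]
      rw [T.toRoot_of_ne hxr]
      subst hpx
      have hqq : q.copy rfl rfl = T.toRoot (T.parent x) := ih rfl hq
      rw [SimpleGraph.Walk.copy_rfl_rfl] at hqq
      rw [hqq]
    · have hpy : T.parent y = x := by tauto
      exfalso
      have hyr : y ≠ T.root := by
        intro hy
        apply hxy
        rw [← hpy, hy, T.parent_root]
      apply hxq
      have hqq : q.copy rfl rfl = T.toRoot y := ih rfl hq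
      rw [SimpleGraph.Walk.copy_rfl_rfl] at hqq
      rw [hqq]
      exact (T.mem_support_toRoot).mpr ⟨1, by simpa using hpy⟩

lemma path_unique {x : V} (p : T.graph.Walk x T.root) (hp : p.IsPath) :
    p = T.toRoot x := by
  have := T.path_unique_aux p rfl hp
  rwa [SimpleGraph.Walk.copy_rfl_rfl] at this

end ParentTree

/-! ### Auxiliary lemmas on `Safflower` -/

namespace Safflower

variable {V : Type} {k : ℕ} (F : Safflower V k)

/-- If the part changes from a vertex to its parent, both are consecutive stem vertices. -/
lemma step_stem {u w : V} (hp : F.tree.parent u = w) (hne : u ≠ w)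
    (hpart : F.part u ≠ F.part w) :
    ∃ (j : ℕ) (h : j + 1 < F.n), u = F.stem ⟨j + 1, h⟩ ∧
      w = F.stem ⟨j, Nat.lt_of_succ_lt h⟩ := by
  have hu : u = F.stem (F.part u) := by
    by_contra hcon
    exact hpart (by rw [← hp, F.part_parent u hcon])
  obtain ⟨j, hj⟩ : ∃ j : ℕ, (F.part u : ℕ) = j := ⟨_, rfl⟩
  rcases j with _ | j
  · exfalso
    have hu0 : F.part u = ⟨0, F.npos⟩ := Fin.ext hj
    rw [hu0, F.stem_root] at hu
    apply hne
    rw [← hp, hu, F.tree.parent_root]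
  · have hjn : j + 1 < F.n := hj ▸ (F.part u).isLt
    have hu' : u = F.stem ⟨j + 1, hjn⟩ := by
      rw [hu]; congr 1; exact Fin.ext hj
    refine ⟨j, hjn, hu', ?_⟩
    rw [← hp, hu', F.stem_parent j hjn]

lemma iterate_stem (s : ℕ) (i : Fin F.n) :
    F.tree.parent^[s] (F.stem i) =
      F.stem ⟨(i : ℕ) - s, lt_of_le_of_lt (Nat.sub_le _ _) i.isLt⟩ := by
  induction s with
  | zero => simp
  | succ s ih =>
    rw [Function.iterate_succ_apply', ih]
    rcases eq_or_ne ((i : ℕ) - s) 0 with h | h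
    · have h' : (i : ℕ) - (s + 1) = 0 := by omega
      have hfin : (⟨(i : ℕ) - s, lt_of_le_of_lt (Nat.sub_le _ _) i.isLt⟩ : Fin F.n)
          = ⟨0, F.npos⟩ := Fin.ext h
      rw [hfin, F.stem_root, F.tree.parent_root, ← F.stem_root]
      congr 1; exact Fin.ext h'.symm
    · obtain ⟨t, ht⟩ : ∃ t, (i : ℕ) - s = t + 1 := ⟨(i : ℕ) - s - 1, by omega⟩
      have htn : t + 1 < F.n := ht ▸ lt_of_le_of_lt (Nat.sub_le _ _) i.isLt
      have hfin : (⟨(i : ℕ) - s, lt_of_le_of_lt (Nat.sub_le _ _) i.isLt⟩ : Fin F.n)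
          = ⟨t + 1, htn⟩ := Fin.ext ht
      rw [hfin, F.stem_parent t htn]
      congr 1; exact Fin.ext (show (t : ℕ) = (i : ℕ) - (s + 1) from by omega)

/-- A non-stem-top vertex cannot be an ancestor-iterate of its own part's stem vertex. -/
lemma not_iterate_stem {u w : V} {m : ℕ} (hp : F.tree.parent u = w) (hne : u ≠ w)
    (hpart : F.part u = F.part w)
    (hm : F.tree.parent^[m] (F.stem (F.part u)) = u) : False := by
  rw [F.iterate_stem m (F.part u)] at hm
  have hpf : (F.part u : ℕ) - m < F.n := lt_of_le_of_lt (Nat.sub_le _ _) (F.part u).isLt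
  have hpu : F.part u = ⟨(F.part u : ℕ) - m, hpf⟩ := by
    conv_lhs => rw [← hm, F.part_stem]
  have hval : (F.part u : ℕ) = (F.part u : ℕ) - m := congrArg Fin.val hpu
  rcases Nat.eq_zero_or_pos (F.part u : ℕ) with h0 | h0
  · -- u is the root
    have hur : u = F.tree.root := by
      conv_lhs => rw [← hm]
      rw [← F.stem_root]; congr 1
      exact Fin.ext (show (F.part u : ℕ) - m = 0 from by omega)
    apply hne
    rw [← hp, hur, F.tree.parent_root]
  · have hm0 : m = 0 := by omega
    subst hm0
    -- u = stem (part u), with part u ≥ 1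
    have hu : u = F.stem ⟨(F.part u : ℕ), (F.part u).isLt⟩ := by
      conv_lhs => rw [← hm]
      congr 1
    obtain ⟨t, ht⟩ : ∃ t : ℕ, (F.part u : ℕ) = t + 1 := ⟨_, (Nat.succ_pred_eq_of_pos h0).symm⟩
    have htn : t + 1 < F.n := ht ▸ (F.part u).isLt
    have hu' : u = F.stem ⟨t + 1, htn⟩ := by rw [hu]; congr 1; exact Fin.ext ht
    have hw : w = F.stem ⟨t, Nat.lt_of_succ_lt htn⟩ := by
      rw [← hp, hu', F.stem_parent t htn]
    have : (F.part u : ℕ) = t := by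
      have := hpart
      rw [hw, F.part_stem] at this
      exact congrArg Fin.val this
    omega

/-- Along a chain staying below a non-part-changing child, the part is constant. -/
lemma part_eq_of_chain {u w : V} (hp : F.tree.parent u = w) (hne : u ≠ w)
    (hpart : F.part u = F.part w) :
    ∀ (m : ℕ) (e : V), F.tree.parent^[m] e = u → F.part e = F.part u := by
  intro m
  induction m with
  | zero => intro e he; rw [← he]; simp
  | succ m ih =>
    intro e he
    rw [Function.iterate_succ_apply] at he
    have hpe := ih (F.tree.parent e) he
    by_cases hee : F.part e = F.part (F.tree.parent e)
    · rw [hee, hpe]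
    · exfalso
      have hene : e ≠ F.tree.parent e := by
        intro hcon; exact hee (by rw [← hcon])
      obtain ⟨j, hjn, hej, hpj⟩ := F.step_stem rfl hene hee
      have hppe : F.part (F.tree.parent e) = ⟨j, Nat.lt_of_succ_lt hjn⟩ := by
        rw [hpj, F.part_stem]
      have hstem : F.stem (F.part u) = F.tree.parent e := by
        rw [← hpe, hppe, hpj]
      exact F.not_iterate_stem hp hne hpart (by rw [hstem]; exact he)

end Safflower

/-- In a safflower `F` rooted at `r`: if `C₁`, `C₂` are paths from `r` to nicely coloured
vertices `e₁`, `e₂` of `F` and `v` is the last common vertex of `C₁` and `C₂`, then at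
least one of `e₁`, `e₂` has the same colour as `v`. -/
theorem safflower_last_common_color {V : Type} [DecidableEq V] {k : ℕ}
    (F : Safflower V k) (e₁ e₂ : V) (he₁ : F.NiceVertex e₁) (he₂ : F.NiceVertex e₂)
    (C₁ : F.tree.graph.Walk F.tree.root e₁) (hC₁ : C₁.IsPath)
    (C₂ : F.tree.graph.Walk F.tree.root e₂) (hC₂ : C₂.IsPath)
    (v : V) (hv₁ : v ∈ C₁.support) (hv₂ : v ∈ C₂.support)
    (hlast : ∀ w, w ∈ C₁.support → w ∈ C₂.support →
      C₁.support.idxOf w ≤ C₁.support.idxOf v) :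
    F.color e₁ = F.color v ∨ F.color e₂ = F.color v := by
  classical
  -- the two paths are the canonical descending chains
  have hC₁' : C₁ = (F.tree.toRoot e₁).reverse := by
    have h := F.tree.path_unique C₁.reverse hC₁.reverse
    rw [← h, SimpleGraph.Walk.reverse_reverse]
  have hC₂' : C₂ = (F.tree.toRoot e₂).reverse := by
    have h := F.tree.path_unique C₂.reverse hC₂.reverse
    rw [← h, SimpleGraph.Walk.reverse_reverse]
  have hs₁ : C₁.support = (F.tree.toRoot e₁).support.reverse := by
    rw [hC₁', SimpleGraph.Walk.support_reverse]
  have hs₂ : C₂.support = (F.tree.toRoot e₂).support.reverse := by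
    rw [hC₂', SimpleGraph.Walk.support_reverse]
  by_cases hve₁ : e₁ = v
  · exact Or.inl (by rw [hve₁])
  by_cases hve₂ : e₂ = v
  · exact Or.inr (by rw [hve₂])
  -- v is a proper ancestor of e₁ and of e₂
  have hv₁' : v ∈ (F.tree.toRoot e₁).support := by
    rw [hs₁, List.mem_reverse] at hv₁; exact hv₁
  have hv₂' : v ∈ (F.tree.toRoot e₂).support := by
    rw [hs₂, List.mem_reverse] at hv₂; exact hv₂
  obtain ⟨m₁', hm₁'⟩ := (F.tree.mem_support_toRoot).mp hv₁'
  obtain ⟨m₂', hm₂'⟩ := (F.tree.mem_support_toRoot).mp hv₂'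
  set m₁ := sInf {m | F.tree.parent^[m] e₁ = v} with hm₁def
  set m₂ := sInf {m | F.tree.parent^[m] e₂ = v} with hm₂def
  have hm₁ : F.tree.parent^[m₁] e₁ = v := by
    rw [hm₁def]
    exact Nat.sInf_mem (⟨m₁', hm₁'⟩ : {m | F.tree.parent^[m] e₁ = v}.Nonempty)
  have hm₂ : F.tree.parent^[m₂] e₂ = v := by
    rw [hm₂def]
    exact Nat.sInf_mem (⟨m₂', hm₂'⟩ : {m | F.tree.parent^[m] e₂ = v}.Nonempty)
  have hm₁pos : 0 < m₁ := by
    rcases Nat.eq_zero_or_pos m₁ with h0 | h0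
    · exact absurd (by rw [h0, Function.iterate_zero_apply] at hm₁; exact hm₁) hve₁
    · exact h0
  have hm₂pos : 0 < m₂ := by
    rcases Nat.eq_zero_or_pos m₂ with h0 | h0
    · exact absurd (by rw [h0, Function.iterate_zero_apply] at hm₂; exact hm₂) hve₂
    · exact h0
  set u₁ := F.tree.parent^[m₁ - 1] e₁ with hu₁def
  set u₂ := F.tree.parent^[m₂ - 1] e₂ with hu₂def
  have hu₁p : F.tree.parent u₁ = v := by
    have h' : F.tree.parent^[(m₁ - 1) + 1] e₁ = v := by
      rw [Nat.sub_add_cancel hm₁pos]; exact hm₁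
    rw [Function.iterate_succ_apply'] at h'
    exact h'
  have hu₂p : F.tree.parent u₂ = v := by
    have h' : F.tree.parent^[(m₂ - 1) + 1] e₂ = v := by
      rw [Nat.sub_add_cancel hm₂pos]; exact hm₂
    rw [Function.iterate_succ_apply'] at h'
    exact h'
  have hu₁v : u₁ ≠ v := by
    intro hcon
    have : m₁ ≤ m₁ - 1 := Nat.sInf_le hcon
    omega
  have hu₂v : u₂ ≠ v := by
    intro hcon
    have : m₂ ≤ m₂ - 1 := Nat.sInf_le hcon
    omega
  -- u₁ ≠ u₂, else it would be a common vertex strictly after v on C₁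
  have hu₁r : u₁ ≠ F.tree.root := by
    intro hcon
    exact hu₁v (by rw [← hu₁p, hcon, F.tree.parent_root])
  have hdepth : F.tree.depth v + 1 = F.tree.depth u₁ := by
    have := F.tree.depth_parent hu₁r; rw [hu₁p] at this; exact this
  have hne : u₁ ≠ u₂ := by
    intro hcon
    have mem₁ : u₁ ∈ C₁.support := by
      rw [hs₁, List.mem_reverse]
      exact (F.tree.mem_support_toRoot).mpr ⟨m₁ - 1, rfl⟩
    have mem₂ : u₁ ∈ C₂.support := by
      rw [hs₂, List.mem_reverse, hcon]
      exact (F.tree.mem_support_toRoot).mpr ⟨m₂ - 1, rfl⟩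
    have hle := hlast u₁ mem₁ mem₂
    rw [hs₁,
      F.tree.indexOf_reverse_support_toRoot (F.tree.depth e₁) e₁ rfl u₁
        ((F.tree.mem_support_toRoot).mpr ⟨m₁ - 1, rfl⟩),
      F.tree.indexOf_reverse_support_toRoot (F.tree.depth e₁) e₁ rfl v hv₁'] at hle
    omega
  -- colour bookkeeping
  have he₁' : F.color e₁ = F.nice (F.part e₁) := he₁
  have he₂' : F.color e₂ = F.nice (F.part e₂) := he₂
  by_cases hq₁ : F.part u₁ = F.part v
  · -- e₁ lies in the same part as v
    have hpe₁ : F.part e₁ = F.part u₁ :=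
      F.part_eq_of_chain hu₁p hu₁v hq₁ (m₁ - 1) e₁ rfl
    have hcv : F.color v = F.nice (F.part v) := by
      by_cases hq₂ : F.part u₂ = F.part v
      · exact F.nice_special v (Or.inr ⟨u₁, u₂, hne, hu₁p, hu₁v, hq₁, hu₂p, hu₂v, hq₂⟩)
      · obtain ⟨j, hjn, hu₂j, hvj⟩ := F.step_stem hu₂p hu₂v hq₂
        rw [hvj, F.nice_root, F.part_stem]
    exact Or.inl (by rw [he₁', hpe₁, hq₁, ← hcv])
  · by_cases hq₂ : F.part u₂ = F.part v
    · have hpe₂ : F.part e₂ = F.part u₂ :=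
        F.part_eq_of_chain hu₂p hu₂v hq₂ (m₂ - 1) e₂ rfl
      have hcv : F.color v = F.nice (F.part v) := by
        obtain ⟨j, hjn, hu₁j, hvj⟩ := F.step_stem hu₁p hu₁v hq₁
        rw [hvj, F.nice_root, F.part_stem]
      exact Or.inr (by rw [he₂', hpe₂, hq₂, ← hcv])
    · -- both children change part: impossible
      exfalso
      obtain ⟨j₁, hj₁n, hu₁j, hvj₁⟩ := F.step_stem hu₁p hu₁v hq₁
      obtain ⟨j₂, hj₂n, hu₂j, hvj₂⟩ := F.step_stem hu₂p hu₂v hq₂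
      have hjj : j₁ = j₂ := by
        have := F.stem_inj (hvj₁ ▸ hvj₂ ▸ rfl :
          F.stem ⟨j₁, Nat.lt_of_succ_lt hj₁n⟩ = F.stem ⟨j₂, Nat.lt_of_succ_lt hj₂n⟩)
        exact congrArg Fin.val this
      apply hne
      rw [hu₁j, hu₂j]
      congr 1
      exact Fin.ext (show j₁ + 1 = j₂ + 1 from by omega)
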